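/- Let G = Alt(6), let H₁ be the stabilizer of the point 1 in the natural action of G on {1,…,6}, and let H₂ be a subgroup of G isomorphic to Alt(5) that acts transitively on {1,…,6}. Let π₁ and π₂ be the faithful permutation representations of G of degree 6 given by left multiplication on the coset spaces G/H₁ and G/H₂, respectively. Then π₁(G) = π₂(G) as subgroups of Sym(6); in particular, the permutation polytopes satisfy P(π₁) = P(π₂), and both equal the convex hull of the 6×6 even permutation matrices. Nevertheless, π₁ and π₂ are not stably equivalent as G-representations. -/

import Mathlib

open Finset

/-- The permutation matrix of `σ`: `(M_σ)_{ij} = 1` if `i = σ j` and `0` otherwise. -/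
def permMat (n : ℕ) (σ : Equiv.Perm (Fin n)) : Matrix (Fin n) (Fin n) ℝ :=
  Matrix.of fun i j => if i = σ j then 1 else 0

lemma permMat_one (n : ℕ) : permMat n 1 = 1 := by
  ext i j; simp [permMat, Matrix.one_apply]; congr

lemma permMat_mul (n : ℕ) (σ τ : Equiv.Perm (Fin n)) :
    permMat n (σ * τ) = permMat n σ * permMat n τ := by
  ext i j
  simp only [permMat, Matrix.mul_apply, Matrix.of_apply, Equiv.Perm.mul_apply]
  rw [Finset.sum_eq_single (τ j)]
  · simp; congr
  · intro k _ hk; simp [hk]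
  · simp

/-- The matrix representation `Π : G → GL_n(ℝ)`, `g ↦ M_{π(g)}`, acting on `ℝⁿ`. -/
noncomputable def permRep (n : ℕ) {G : Type} [Group G] (π : G →* Equiv.Perm (Fin n)) :
    Representation ℝ G (Fin n → ℝ) where
  toFun g := (permMat n (π g)).mulVecLin
  map_one' := by simp [permMat_one]; rfl
  map_mul' g h := by simp [permMat_mul]; rfl

/-- Relabelling of a symmetric group along a bijection, as a group homomorphism. -/
def permCongrHom {α β : Type} (e : α ≃ β) : Equiv.Perm α →* Equiv.Perm β where
  toFun σ := (e.symm.trans σ).trans e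
  map_one' := by ext x; simp
  map_mul' σ τ := by ext x; simp

variable {G : Type} [Group G] [Fintype G]

/-- The affine kernel `ker°ρ` of a real representation `ρ` of `G`. -/
def affKer {V : Type} [AddCommGroup V] [Module ℝ V]
    (ρ : Representation ℝ G V) : Set (G → ℝ) :=
  {l | (∑ g : G, l g • (ρ g : V →ₗ[ℝ] V)) = 0 ∧ (∑ g : G, l g) = 0}

/-- Direct sum (realized on the product space) of two representations. -/
def prodRep {V W : Type} [AddCommGroup V] [Module ℝ V] [AddCommGroup W] [Module ℝ W]
    (ρ : Representation ℝ G V) (σ : Representation ℝ G W) :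
    Representation ℝ G (V × W) where
  toFun g := (ρ g).prodMap (σ g)
  map_one' := by ext <;> simp
  map_mul' g h := by ext <;> simp

/-- Isomorphism of `G`-representations. -/
def RepIso {V W : Type} [AddCommGroup V] [Module ℝ V] [AddCommGroup W] [Module ℝ W]
    (ρ : Representation ℝ G V) (σ : Representation ℝ G W) : Prop :=
  ∃ e : V ≃ₗ[ℝ] W, ∀ (g : G) (v : V), e (ρ g v) = σ g (e v)

/-- Stable equivalence of real representations. -/
def StablyEquivalent {V W : Type} [AddCommGroup V] [Module ℝ V] [AddCommGroup W] [Module ℝ W]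
    (ρ₁ : Representation ℝ G V) (ρ₂ : Representation ℝ G W) : Prop :=
  ∃ (V' : Type) (_ : AddCommGroup V') (_ : Module ℝ V') (ρ₁' : Representation ℝ G V')
    (W' : Type) (_ : AddCommGroup W') (_ : Module ℝ W') (ρ₂' : Representation ℝ G W'),
    affKer ρ₁ ⊆ affKer ρ₁' ∧ affKer ρ₂ ⊆ affKer ρ₂' ∧
    RepIso (prodRep ρ₁ ρ₁') (prodRep ρ₂ ρ₂')

/-! ### Auxiliary material -/

section Aux

open Equiv

lemma permCongrHom_injective {α β : Type} (e : α ≃ β) :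
    Function.Injective (_root_.permCongrHom e) := by
  intro σ τ h
  ext x
  have := congrArg (fun π : Equiv.Perm β => e.symm (π (e x))) h
  simpa [_root_.permCongrHom] using this

/-- No subgroup of `A₆` has index two. -/
lemma A6.no_index_two (K : Subgroup ↥(alternatingGroup (Fin 6))) : K.index ≠ 2 := by
  intro h2
  have hsq : ∀ a : ↥(alternatingGroup (Fin 6)), a ^ 2 ∈ K :=
    fun a => Subgroup.sq_mem_of_index_two h2 a
  have hle : alternatingGroup (Fin 6) ≤ K.map (alternatingGroup (Fin 6)).subtype := by
    conv_lhs => rw [← Equiv.Perm.closure_three_cycles_eq_alternating]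
    refine Subgroup.closure_le _ |>.2 ?_
    rintro σ hσ
    have hσ2 : Equiv.Perm.IsThreeCycle (σ * σ) := hσ.isThreeCycle_sq
    have hmem : σ * σ ∈ alternatingGroup (Fin 6) := hσ2.mem_alternatingGroup
    have horder : σ ^ 3 = 1 := by
      have := hσ.orderOf
      rw [← this]; exact pow_orderOf_eq_one σ
    have : (⟨σ * σ, hmem⟩ : ↥(alternatingGroup (Fin 6))) ^ 2 ∈ K := hsq _
    refine ⟨_, this, ?_⟩
    show ((⟨σ * σ, hmem⟩ : ↥(alternatingGroup (Fin 6))) ^ 2 : Perm (Fin 6)) = σ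
    push_cast
    rw [show σ * σ = σ ^ 2 from (sq σ).symm, ← pow_mul]
    rw [show 2 * 2 = 3 + 1 from rfl, pow_succ, horder, one_mul]
  have hK : K = ⊤ := by
    rw [eq_top_iff]
    intro a _
    have : (a : Perm (Fin 6)) ∈ K.map (alternatingGroup (Fin 6)).subtype := hle a.2
    obtain ⟨b, hb, hba⟩ := this
    have : b = a := Subtype.ext hba
    rwa [← this]
  rw [hK, Subgroup.index_top] at h2
  omega

/-- `A₆` moves the point `1` anywhere. -/
lemma A6.trans_one : ∀ t : Fin 6, ∃ u : ↥(alternatingGroup (Fin 6)),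
    (u : Equiv.Perm (Fin 6)) 1 = t := by
  intro t
  fin_cases t
  · exact ⟨⟨Equiv.swap 0 1 * Equiv.swap 2 3, Equiv.Perm.mem_alternatingGroup.2 (by decide)⟩,
      by decide⟩
  · exact ⟨1, rfl⟩
  · exact ⟨⟨Equiv.swap 1 2 * Equiv.swap 3 4, Equiv.Perm.mem_alternatingGroup.2 (by decide)⟩,
      by decide⟩
  · exact ⟨⟨Equiv.swap 1 3 * Equiv.swap 2 4, Equiv.Perm.mem_alternatingGroup.2 (by decide)⟩,
      by decide⟩
  · exact ⟨⟨Equiv.swap 1 4 * Equiv.swap 2 3, Equiv.Perm.mem_alternatingGroup.2 (by decide)⟩,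
      by decide⟩
  · exact ⟨⟨Equiv.swap 1 5 * Equiv.swap 2 3, Equiv.Perm.mem_alternatingGroup.2 (by decide)⟩,
      by decide⟩

lemma A6.card : Nat.card ↥(alternatingGroup (Fin 6)) = 360 := by
  have h := two_mul_card_alternatingGroup (α := Fin 6)
  rw [Fintype.card_perm] at h
  simp only [Fintype.card_fin] at h
  have hf : Nat.factorial 6 = 720 := by norm_num [Nat.factorial]
  rw [hf] at h
  rw [Nat.card_eq_fintype_card]
  omega

lemma A5.card : Nat.card ↥(alternatingGroup (Fin 5)) = 60 := by
  have h := two_mul_card_alternatingGroup (α := Fin 5)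
  rw [Fintype.card_perm] at h
  simp only [Fintype.card_fin] at h
  have hf : Nat.factorial 5 = 120 := by norm_num [Nat.factorial]
  rw [hf] at h
  rw [Nat.card_eq_fintype_card]
  omega

/-- Any injective homomorphism from `A₆` to `Sym(6)` has image the alternating group. -/
lemma A6.range_eq (π : ↥(alternatingGroup (Fin 6)) →* Equiv.Perm (Fin 6))
    (hinj : Function.Injective ⇑π) : π.range = alternatingGroup (Fin 6) := by
  have hsign : ∀ g, Equiv.Perm.sign (π g) = 1 := by
    set f : ↥(alternatingGroup (Fin 6)) →* ℤˣ := Equiv.Perm.sign.comp π with hf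
    have hker : f.ker.index = Nat.card f.range := Subgroup.index_ker f
    have hdvd : Nat.card f.range ∣ Nat.card ℤˣ := Subgroup.card_subgroup_dvd_card _
    have hz : Nat.card ℤˣ = 2 := by simp [Nat.card_eq_fintype_card]
    rw [hz] at hdvd
    rcases (Nat.dvd_prime Nat.prime_two).1 hdvd with h1 | h2
    · rw [h1] at hker
      have : f.ker = ⊤ := Subgroup.index_eq_one.1 hker
      intro g
      have hgk : g ∈ f.ker := by rw [this]; trivial
      exact hgk
    · rw [h2] at hker
      exact absurd hker (A6.no_index_two _)
  have hle : π.range ≤ alternatingGroup (Fin 6) := by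
    rintro p ⟨g, rfl⟩
    exact Equiv.Perm.mem_alternatingGroup.2 (hsign g)
  refine Subgroup.eq_of_le_of_card_ge hle ?_
  have h1 : Nat.card ↥π.range = 360 := by
    rw [← Nat.card_congr (MonoidHom.ofInjective hinj).toEquiv]
    exact A6.card
  rw [h1, A6.card]

end Aux

/-! ### Counting for a pair of jointly transitive permutation representations -/

section Counting

open Equiv

variable {H : Type} [Group H] [Fintype H] [DecidableEq H]
variable (π₁ π₂ : H →* Equiv.Perm (Fin 6))

/-- Joint fiber count for the product action. -/
def jc (i j k l : Fin 6) : ℕ :=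
  (univ.filter (fun g : H => π₁ g j = i ∧ π₂ g l = k)).card

/-- Number of fixed points of `π₂ g`. -/
def nfix (g : H) : ℕ := (univ.filter (fun k : Fin 6 => π₂ g k = k)).card

/-- The distinguishing affine-relation coefficients. -/
noncomputable def lam (g : H) : ℝ := (nfix π₂ g : ℝ) - 1

variable (hT : ∀ j l i k : Fin 6, ∃ g : H, π₁ g j = i ∧ π₂ g l = k)

include hT in
lemma jc_eq (i j k l i' j' k' l' : Fin 6) :
    jc π₁ π₂ i j k l = jc π₁ π₂ i' j' k' l' := by
  obtain ⟨s, hs1, hs2⟩ := hT j' l' j l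
  obtain ⟨t, ht1, ht2⟩ := hT i k i' k'
  have hs1' : (π₁ s)⁻¹ j = j' := by rw [← hs1]; simp
  have hs2' : (π₂ s)⁻¹ l = l' := by rw [← hs2]; simp
  have ht1' : (π₁ t)⁻¹ i' = i := by rw [← ht1]; simp
  have ht2' : (π₂ t)⁻¹ k' = k := by rw [← ht2]; simp
  unfold jc
  refine Finset.card_bij' (fun g _ => t * g * s) (fun g _ => t⁻¹ * g * s⁻¹) ?_ ?_ ?_ ?_
  · intro g hg
    simp only [mem_filter, mem_univ, true_and] at hg ⊢
    simp [map_mul, Equiv.Perm.mul_apply, hs1, hs2, hg.1, hg.2, ht1, ht2]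
  · intro g hg
    simp only [mem_filter, mem_univ, true_and] at hg ⊢
    simp [map_mul, map_inv, Equiv.Perm.mul_apply, hs1', hs2', hg.1, hg.2, ht1', ht2']
  · intro g _; group
  · intro g _; group

include hT in
lemma count_pi1 (i j : Fin 6) :
    (univ.filter (fun g : H => π₁ g j = i)).card = 6 * jc π₁ π₂ 0 0 0 0 := by
  rw [Finset.card_eq_sum_card_fiberwise
    (f := fun g : H => π₂ g 0) (t := univ) (fun x _ => mem_univ _)]
  have h : ∀ k : Fin 6,
      ((univ.filter (fun g : H => π₁ g j = i)).filter (fun g : H => π₂ g 0 = k)).card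
        = jc π₁ π₂ 0 0 0 0 := by
    intro k
    rw [Finset.filter_filter]
    exact jc_eq π₁ π₂ hT i j k 0 0 0 0 0
  simp only [h]
  simp [Finset.sum_const, Fintype.card_fin]

include hT in
lemma count_pi2 (k l : Fin 6) :
    (univ.filter (fun g : H => π₂ g l = k)).card = 6 * jc π₁ π₂ 0 0 0 0 := by
  rw [Finset.card_eq_sum_card_fiberwise
    (f := fun g : H => π₁ g 0) (t := univ) (fun x _ => mem_univ _)]
  have h : ∀ i : Fin 6,
      ((univ.filter (fun g : H => π₂ g l = k)).filter (fun g : H => π₁ g 0 = i)).card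
        = jc π₁ π₂ 0 0 0 0 := by
    intro i
    rw [Finset.filter_filter]
    have heq : (univ.filter fun g : H => π₂ g l = k ∧ π₁ g 0 = i)
        = univ.filter fun g : H => π₁ g 0 = i ∧ π₂ g l = k := by
      apply Finset.filter_congr; intro g _; exact and_comm
    rw [heq]
    exact jc_eq π₁ π₂ hT i 0 k l 0 0 0 0
  simp only [h]
  simp [Finset.sum_const, Fintype.card_fin]

include hT in
lemma count_all : Fintype.card H = 36 * jc π₁ π₂ 0 0 0 0 := by
  have h := Finset.card_eq_sum_card_fiberwise
    (f := fun g : H => π₁ g 0) (s := univ) (t := univ) (fun x _ => mem_univ _)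
  rw [← Finset.card_univ, h]
  have h2 : ∀ i : Fin 6, (univ.filter (fun g : H => π₁ g 0 = i)).card
      = 6 * jc π₁ π₂ 0 0 0 0 := fun i => count_pi1 π₁ π₂ hT i 0
  simp only [h2]
  simp [Finset.sum_const, Fintype.card_fin]; ring

include hT in
lemma sum_nfix_filter (i j : Fin 6) :
    ∑ g ∈ univ.filter (fun g : H => π₁ g j = i), nfix π₂ g
      = 6 * jc π₁ π₂ 0 0 0 0 := by
  have h : ∀ g : H, nfix π₂ g = ∑ k : Fin 6, if π₂ g k = k then 1 else 0 := by
    intro g; rw [nfix, Finset.card_filter]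
  simp only [h]
  rw [Finset.sum_comm]
  have h2 : ∀ k : Fin 6,
      (∑ g ∈ univ.filter (fun g : H => π₁ g j = i), if π₂ g k = k then 1 else 0)
        = jc π₁ π₂ 0 0 0 0 := by
    intro k
    rw [← Finset.card_filter, Finset.filter_filter]
    exact jc_eq π₁ π₂ hT i j k k 0 0 0 0
  simp only [h2]
  rw [Finset.sum_const]
  simp [Fintype.card_fin]

include hT in
lemma sum_nfix_univ :
    ∑ g : H, nfix π₂ g = 36 * jc π₁ π₂ 0 0 0 0 := by
  have h : ∀ g : H, nfix π₂ g = ∑ k : Fin 6, if π₂ g k = k then 1 else 0 := by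
    intro g; rw [nfix, Finset.card_filter]
  simp only [h]
  rw [Finset.sum_comm]
  have h2 : ∀ k : Fin 6, (∑ g : H, if π₂ g k = k then 1 else 0)
      = 6 * jc π₁ π₂ 0 0 0 0 := by
    intro k
    rw [← Finset.card_filter]
    exact count_pi2 π₁ π₂ hT k k
  simp only [h2]
  rw [Finset.sum_const]
  simp [Fintype.card_fin]; ring

include hT in
lemma lam_sum_eq_zero : ∑ g : H, lam π₂ g = 0 := by
  unfold lam
  rw [Finset.sum_sub_distrib]
  have h1 : ∑ g : H, ((nfix π₂ g : ℝ)) = ((∑ g : H, nfix π₂ g : ℕ) : ℝ) := by push_cast; rfl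
  rw [h1, sum_nfix_univ π₁ π₂ hT]
  have h2 : ∑ _g : H, (1 : ℝ) = (Fintype.card H : ℝ) := by
    rw [Finset.sum_const, Finset.card_univ, nsmul_eq_mul, mul_one]
  rw [h2, count_all π₁ π₂ hT]
  push_cast
  ring

include hT in
lemma lam_rel (i j : Fin 6) :
    ∑ g : H, lam π₂ g * (if i = π₁ g j then 1 else 0) = 0 := by
  have h0 : ∀ g : H, lam π₂ g * (if i = π₁ g j then 1 else 0)
      = if π₁ g j = i then lam π₂ g else 0 := by
    intro g
    by_cases hc : i = π₁ g j
    · rw [if_pos hc, if_pos hc.symm, mul_one]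
    · rw [if_neg hc, if_neg (show ¬ π₁ g j = i from fun h => hc h.symm), mul_zero]
  simp only [h0]
  rw [← Finset.sum_filter]
  unfold lam
  rw [Finset.sum_sub_distrib]
  have h1 : ∑ g ∈ univ.filter (fun g : H => π₁ g j = i), ((nfix π₂ g : ℝ))
      = ((∑ g ∈ univ.filter (fun g : H => π₁ g j = i), nfix π₂ g : ℕ) : ℝ) := by
    push_cast; rfl
  rw [h1, sum_nfix_filter π₁ π₂ hT i j]
  have h2 : ∑ _g ∈ univ.filter (fun g : H => π₁ g j = i), (1 : ℝ)
      = ((univ.filter (fun g : H => π₁ g j = i)).card : ℝ) := by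
    rw [Finset.sum_const, nsmul_eq_mul, mul_one]
  rw [h2, count_pi1 π₁ π₂ hT i j]
  push_cast
  ring

lemma lam_pos :
    (5 : ℝ) ≤ ∑ g : H, lam π₂ g * (if (0 : Fin 6) = π₂ g 0 then 1 else 0) := by
  have h0 : ∀ g : H, lam π₂ g * (if (0 : Fin 6) = π₂ g 0 then 1 else 0)
      = if π₂ g 0 = 0 then lam π₂ g else 0 := by
    intro g
    by_cases hc : (0 : Fin 6) = π₂ g 0
    · rw [if_pos hc, if_pos hc.symm, mul_one]
    · rw [if_neg hc, if_neg (show ¬ π₂ g 0 = 0 from fun h => hc h.symm), mul_zero]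
  simp only [h0]
  rw [← Finset.sum_filter]
  have h1mem : (1 : H) ∈ univ.filter (fun g : H => π₂ g 0 = 0) := by
    simp
  have hlam1 : lam π₂ (1 : H) = 5 := by
    unfold lam nfix
    have : (univ.filter (fun k : Fin 6 => π₂ (1 : H) k = k)) = univ := by
      apply Finset.filter_true_of_mem
      intro k _
      simp
    rw [this]
    simp
    norm_num
  calc (5 : ℝ) = lam π₂ (1 : H) := hlam1.symm
    _ ≤ ∑ g ∈ univ.filter (fun g : H => π₂ g 0 = 0), lam π₂ g := by
        apply Finset.single_le_sum (f := fun g => lam π₂ g) _ h1mem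
        intro g hg
        simp only [mem_filter, mem_univ, true_and] at hg
        show (0 : ℝ) ≤ lam π₂ g
        unfold lam
        have : 1 ≤ nfix π₂ g := by
          apply Finset.card_pos.2
          exact ⟨0, by simp [hg]⟩
        have : (1 : ℝ) ≤ (nfix π₂ g : ℝ) := by exact_mod_cast this
        linarith

end Counting

section Main

open Equiv


variable (H₁ H₂ : Subgroup ↥(alternatingGroup (Fin 6)))

lemma toPermComp_apply {X : Type} [MulAction ↥(alternatingGroup (Fin 6)) X]
    (e : X ≃ Fin 6) (g : ↥(alternatingGroup (Fin 6))) (x : Fin 6) :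
    ((_root_.permCongrHom e).comp
      (MulAction.toPermHom ↥(alternatingGroup (Fin 6)) X)) g x = e (g • e.symm x) := rfl

lemma inj₁ (hH₁ : ∀ g : ↥(alternatingGroup (Fin 6)),
      g ∈ H₁ ↔ ((g : Equiv.Perm (Fin 6)) 1 = 1))
    (e₁ : (↥(alternatingGroup (Fin 6)) ⧸ H₁) ≃ Fin 6) :
    Function.Injective
      ((_root_.permCongrHom e₁).comp
        (MulAction.toPermHom ↥(alternatingGroup (Fin 6)) (↥(alternatingGroup (Fin 6)) ⧸ H₁))) := by
  rw [injective_iff_map_eq_one]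
  intro a ha
  have hq : ∀ q : ↥(alternatingGroup (Fin 6)) ⧸ H₁, a • q = q := by
    intro q
    have h1 : ((_root_.permCongrHom e₁).comp (MulAction.toPermHom _ _)) a (e₁ q) = e₁ q := by
      rw [ha]; rfl
    have h2 : e₁ (a • e₁.symm (e₁ q)) = e₁ q := h1
    rw [Equiv.symm_apply_apply] at h2
    exact e₁.injective h2
  have hfix : ∀ u : ↥(alternatingGroup (Fin 6)),
      ((a : Equiv.Perm (Fin 6)))⁻¹ ((u : Equiv.Perm (Fin 6)) 1) = (u : Equiv.Perm (Fin 6)) 1 := by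
    intro u
    have h3 : a • ((u : ↥(alternatingGroup (Fin 6)) ⧸ H₁)) = (u : _ ⧸ H₁) := hq _
    rw [MulAction.Quotient.smul_coe, smul_eq_mul] at h3
    have h4 : (a * u)⁻¹ * u ∈ H₁ := QuotientGroup.eq.1 h3
    rw [hH₁] at h4
    rw [show (a * u)⁻¹ * u = u⁻¹ * (a⁻¹ * u) by group] at h4
    simp only [Subgroup.coe_mul, Subgroup.coe_inv, Equiv.Perm.mul_apply] at h4
    have h5 := congrArg (⇑(u : Equiv.Perm (Fin 6))) h4
    simpa using h5
  have hone : (a : Equiv.Perm (Fin 6)) = 1 := by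
    ext t
    obtain ⟨u, hu⟩ := A6.trans_one t
    have := hfix u
    rw [hu] at this
    have h6 : t = (a : Equiv.Perm (Fin 6)) t := (Equiv.Perm.inv_eq_iff_eq).1 this
    exact congrArg Fin.val h6.symm
  exact Subtype.ext (by rw [hone]; rfl)

lemma inj₂ (hH₂iso : Nonempty (↥H₂ ≃* ↥(alternatingGroup (Fin 5))))
    (e₂ : (↥(alternatingGroup (Fin 6)) ⧸ H₂) ≃ Fin 6) :
    Function.Injective
      ((_root_.permCongrHom e₂).comp
        (MulAction.toPermHom ↥(alternatingGroup (Fin 6)) (↥(alternatingGroup (Fin 6)) ⧸ H₂))) := by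
  obtain ⟨iso⟩ := hH₂iso
  have hker : (MulAction.toPermHom ↥(alternatingGroup (Fin 6))
      (↥(alternatingGroup (Fin 6)) ⧸ H₂)).ker = ⊥ := by
    set K := (MulAction.toPermHom ↥(alternatingGroup (Fin 6))
      (↥(alternatingGroup (Fin 6)) ⧸ H₂)).ker with hK
    have hKH₂ : K ≤ H₂ := by
      intro g hg
      have h1 : g • ((1 : ↥(alternatingGroup (Fin 6))) : _ ⧸ H₂)
          = ((1 : ↥(alternatingGroup (Fin 6))) : _ ⧸ H₂) := by
        have : MulAction.toPermHom _ (_ ⧸ H₂) g = 1 := hg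
        calc g • ((1 : ↥(alternatingGroup (Fin 6))) : _ ⧸ H₂)
            = (MulAction.toPermHom _ (_ ⧸ H₂) g) ((1 : ↥(alternatingGroup (Fin 6))) : _ ⧸ H₂) := rfl
          _ = _ := by rw [this]; rfl
      rw [MulAction.Quotient.smul_coe, smul_eq_mul] at h1
      have h4 : (g * 1)⁻¹ * 1 ∈ H₂ := QuotientGroup.eq.1 h1
      simpa using h4
    haveI : Nontrivial ↥(alternatingGroup (Fin 5)) :=
      alternatingGroup.nontrivial_of_three_le_card (by simp)
    haveI : Nontrivial ↥H₂ := iso.toEquiv.nontrivial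
    haveI : IsSimpleGroup ↥H₂ :=
      IsSimpleGroup.isSimpleGroup_of_surjective iso.symm.toMonoidHom iso.symm.surjective
    rcases Subgroup.Normal.eq_bot_or_eq_top
      (inferInstance : (K.subgroupOf H₂).Normal) with hbot | htop
    · have hdisj : Disjoint K H₂ := Subgroup.subgroupOf_eq_bot.1 hbot
      rw [eq_bot_iff]
      intro g hg
      exact hdisj.le_bot ⟨hg, hKH₂ hg⟩
    · exfalso
      have hKeq : K = H₂ := le_antisymm hKH₂ (Subgroup.subgroupOf_eq_top.1 htop)
      haveI hH₂n : H₂.Normal := hKeq ▸ (inferInstance : K.Normal)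
      have hc2 : Nat.card ↥H₂ = 60 := by
        rw [Nat.card_congr iso.toEquiv]; exact A5.card
      have hidx : H₂.index = 6 := by
        have := Subgroup.card_mul_index H₂
        rw [hc2, A6.card] at this
        omega
      haveI : Fact (Nat.Prime 3) := ⟨by norm_num⟩
      have hQcard : Nat.card (↥(alternatingGroup (Fin 6)) ⧸ H₂) = 6 := hidx
      obtain ⟨x, hx⟩ := exists_prime_orderOf_dvd_card' 3 (by rw [hQcard]; norm_num)
      have hL : Nat.card (Subgroup.zpowers x) = 3 := by rw [Nat.card_zpowers, hx]
      have hLidx : (Subgroup.zpowers x).index = 2 := by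
        have := Subgroup.card_mul_index (Subgroup.zpowers x)
        rw [hL, hQcard] at this
        omega
      have : ((Subgroup.zpowers x).comap (QuotientGroup.mk' H₂)).index = 2 := by
        rw [Subgroup.index_comap_of_surjective _ (QuotientGroup.mk'_surjective H₂)]
        exact hLidx
      exact A6.no_index_two _ this
  intro a b hab
  have h1 : (MulAction.toPermHom ↥(alternatingGroup (Fin 6))
      (↥(alternatingGroup (Fin 6)) ⧸ H₂)) a
      = (MulAction.toPermHom ↥(alternatingGroup (Fin 6)) (↥(alternatingGroup (Fin 6)) ⧸ H₂)) b :=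
    permCongrHom_injective e₂ hab
  exact (MonoidHom.ker_eq_bot_iff _).1 hker h1

lemma joint_trans
    (hH₁ : ∀ g : ↥(alternatingGroup (Fin 6)),
      g ∈ H₁ ↔ ((g : Equiv.Perm (Fin 6)) 1 = 1))
    (hH₂trans : ∀ x y : Fin 6, ∃ h ∈ H₂,
      ((h : ↥(alternatingGroup (Fin 6))) : Equiv.Perm (Fin 6)) x = y)
    (e₁ : (↥(alternatingGroup (Fin 6)) ⧸ H₁) ≃ Fin 6)
    (e₂ : (↥(alternatingGroup (Fin 6)) ⧸ H₂) ≃ Fin 6) :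
    ∀ j l i k : Fin 6, ∃ g : ↥(alternatingGroup (Fin 6)),
      ((_root_.permCongrHom e₁).comp
        (MulAction.toPermHom ↥(alternatingGroup (Fin 6))
          (↥(alternatingGroup (Fin 6)) ⧸ H₁))) g j = i ∧
      ((_root_.permCongrHom e₂).comp
        (MulAction.toPermHom ↥(alternatingGroup (Fin 6))
          (↥(alternatingGroup (Fin 6)) ⧸ H₂))) g l = k := by
  intro j l i k
  obtain ⟨u, hu⟩ := QuotientGroup.mk_surjective (e₁.symm j)
  obtain ⟨v, hv⟩ := QuotientGroup.mk_surjective (e₁.symm i)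
  obtain ⟨x, hx⟩ := QuotientGroup.mk_surjective (e₂.symm l)
  obtain ⟨z, hz⟩ := QuotientGroup.mk_surjective (e₂.symm k)
  obtain ⟨h, hh2, hab⟩ := hH₂trans (((x⁻¹ * u : ↥(alternatingGroup (Fin 6))) :
    Equiv.Perm (Fin 6)) 1) (((z⁻¹ * v : ↥(alternatingGroup (Fin 6))) : Equiv.Perm (Fin 6)) 1)
  refine ⟨z * h * x⁻¹, ?_, ?_⟩
  · show e₁ ((z * h * x⁻¹) • e₁.symm j) = i
    rw [← hu, MulAction.Quotient.smul_coe, smul_eq_mul, Equiv.apply_eq_iff_eq_symm_apply, ← hv,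
      QuotientGroup.eq]
    rw [show (z * h * x⁻¹ * u)⁻¹ * v = u⁻¹ * (x * (h⁻¹ * (z⁻¹ * v))) by group]
    rw [hH₁]
    simp only [Subgroup.coe_mul, Subgroup.coe_inv, Equiv.Perm.mul_apply] at hab ⊢
    rw [← hab]
    simp
  · show e₂ ((z * h * x⁻¹) • e₂.symm l) = k
    rw [← hx, MulAction.Quotient.smul_coe, smul_eq_mul, Equiv.apply_eq_iff_eq_symm_apply, ← hz,
      QuotientGroup.eq]
    rw [show (z * h * x⁻¹ * x)⁻¹ * z = h⁻¹ by group]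
    exact inv_mem hh2

end Main

section LinAlg


lemma sum_smul_mulVecLin {ι : Type} (s : Finset ι) (f : ι → ℝ)
    (M : ι → Matrix (Fin 6) (Fin 6) ℝ) :
    (∑ g ∈ s, f g • (M g).mulVecLin) = (∑ g ∈ s, f g • M g).mulVecLin := by
  apply LinearMap.ext; intro v
  funext i
  rw [LinearMap.sum_apply]
  simp only [LinearMap.smul_apply, Matrix.mulVecLin_apply, Finset.sum_apply, Pi.smul_apply,
    Matrix.mulVec, dotProduct, smul_eq_mul, Matrix.sum_apply, Matrix.smul_apply,
    Finset.sum_mul, Finset.mul_sum]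
  rw [Finset.sum_comm]
  apply Finset.sum_congr rfl; intro g _
  apply Finset.sum_congr rfl; intro j _
  ring


end LinAlg

section FinalAux

lemma range_permMat_eq (π : ↥(alternatingGroup (Fin 6)) →* Equiv.Perm (Fin 6))
    (h : π.range = alternatingGroup (Fin 6)) :
    Set.range (fun g : ↥(alternatingGroup (Fin 6)) => permMat 6 (π g))
      = permMat 6 '' {σ : Equiv.Perm (Fin 6) | σ ∈ alternatingGroup (Fin 6)} := by
  have h1 : Set.range (fun g : ↥(alternatingGroup (Fin 6)) => permMat 6 (π g))
      = permMat 6 '' Set.range ⇑π := by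
    rw [← Set.range_comp]; rfl
  rw [h1, ← MonoidHom.coe_range, h]; rfl

lemma alt_set_eq :
    {M : Matrix (Fin 6) (Fin 6) ℝ | ∃ σ ∈ alternatingGroup (Fin 6), M = permMat 6 σ}
      = permMat 6 '' {σ : Equiv.Perm (Fin 6) | σ ∈ alternatingGroup (Fin 6)} := by
  ext M
  simp only [Set.mem_setOf_eq, Set.mem_image]
  constructor
  · rintro ⟨σ, hσ, rfl⟩; exact ⟨σ, hσ, rfl⟩
  · rintro ⟨σ, hσ, rfl⟩; exact ⟨σ, hσ, rfl⟩

end FinalAux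


/-- The "almost example". Let `G = Alt(6)`, `H₁` the stabilizer of
the point `1`, and `H₂ ≅ Alt(5)` a transitive subgroup. The degree-6 permutation
representations `π₁`, `π₂` of `G` on `G/H₁` and `G/H₂` (read in `Sym(6)` via any
identifications of the coset spaces with `{1,…,6}`) are faithful and have the same
image; their permutation polytopes coincide and equal the convex hull of the even
`6×6` permutation matrices; yet `π₁` and `π₂` are not stably equivalent. -/
theorem alt6_equal_polytopes_not_stablyEquivalent
    (H₁ H₂ : Subgroup ↥(alternatingGroup (Fin 6)))
    (hH₁ : ∀ g : ↥(alternatingGroup (Fin 6)),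
      g ∈ H₁ ↔ ((g : Equiv.Perm (Fin 6)) 1 = 1))
    (hH₂iso : Nonempty (↥H₂ ≃* ↥(alternatingGroup (Fin 5))))
    (hH₂trans : ∀ x y : Fin 6, ∃ h ∈ H₂, ((h : ↥(alternatingGroup (Fin 6))) : Equiv.Perm (Fin 6)) x = y)
    (e₁ : (↥(alternatingGroup (Fin 6)) ⧸ H₁) ≃ Fin 6)
    (e₂ : (↥(alternatingGroup (Fin 6)) ⧸ H₂) ≃ Fin 6) :
    Function.Injective
      ((permCongrHom e₁).comp
        (MulAction.toPermHom ↥(alternatingGroup (Fin 6)) (↥(alternatingGroup (Fin 6)) ⧸ H₁))) ∧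
    Function.Injective
      ((permCongrHom e₂).comp
        (MulAction.toPermHom ↥(alternatingGroup (Fin 6)) (↥(alternatingGroup (Fin 6)) ⧸ H₂))) ∧
    ((permCongrHom e₁).comp
        (MulAction.toPermHom ↥(alternatingGroup (Fin 6)) (↥(alternatingGroup (Fin 6)) ⧸ H₁))).range
      = ((permCongrHom e₂).comp
        (MulAction.toPermHom ↥(alternatingGroup (Fin 6)) (↥(alternatingGroup (Fin 6)) ⧸ H₂))).range ∧
    convexHull ℝ (Set.range fun g : ↥(alternatingGroup (Fin 6)) =>
        permMat 6 (((permCongrHom e₁).comp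
          (MulAction.toPermHom ↥(alternatingGroup (Fin 6)) (↥(alternatingGroup (Fin 6)) ⧸ H₁))) g))
      = convexHull ℝ (Set.range fun g : ↥(alternatingGroup (Fin 6)) =>
        permMat 6 (((permCongrHom e₂).comp
          (MulAction.toPermHom ↥(alternatingGroup (Fin 6)) (↥(alternatingGroup (Fin 6)) ⧸ H₂))) g)) ∧
    convexHull ℝ (Set.range fun g : ↥(alternatingGroup (Fin 6)) =>
        permMat 6 (((permCongrHom e₁).comp
          (MulAction.toPermHom ↥(alternatingGroup (Fin 6)) (↥(alternatingGroup (Fin 6)) ⧸ H₁))) g))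
      = convexHull ℝ {M : Matrix (Fin 6) (Fin 6) ℝ |
          ∃ σ ∈ alternatingGroup (Fin 6), M = permMat 6 σ} ∧
    ¬ StablyEquivalent
        (permRep 6 ((permCongrHom e₁).comp
          (MulAction.toPermHom ↥(alternatingGroup (Fin 6)) (↥(alternatingGroup (Fin 6)) ⧸ H₁))))
        (permRep 6 ((permCongrHom e₂).comp
          (MulAction.toPermHom ↥(alternatingGroup (Fin 6)) (↥(alternatingGroup (Fin 6)) ⧸ H₂)))) := by
  set f₁ := (permCongrHom e₁).comp
    (MulAction.toPermHom ↥(alternatingGroup (Fin 6)) (↥(alternatingGroup (Fin 6)) ⧸ H₁)) with hf₁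
  set f₂ := (permCongrHom e₂).comp
    (MulAction.toPermHom ↥(alternatingGroup (Fin 6)) (↥(alternatingGroup (Fin 6)) ⧸ H₂)) with hf₂
  have hi1 : Function.Injective ⇑f₁ := inj₁ H₁ hH₁ e₁
  have hi2 : Function.Injective ⇑f₂ := inj₂ H₂ hH₂iso e₂
  have hr1 : f₁.range = alternatingGroup (Fin 6) := A6.range_eq f₁ hi1
  have hr2 : f₂.range = alternatingGroup (Fin 6) := A6.range_eq f₂ hi2
  have hT : ∀ j l i k : Fin 6, ∃ g : ↥(alternatingGroup (Fin 6)), f₁ g j = i ∧ f₂ g l = k :=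
    joint_trans H₁ H₂ hH₁ hH₂trans e₁ e₂
  refine ⟨hi1, hi2, hr1.trans hr2.symm, ?_, ?_, ?_⟩
  · rw [range_permMat_eq f₁ hr1, range_permMat_eq f₂ hr2]
  · rw [range_permMat_eq f₁ hr1, alt_set_eq]
  · rintro ⟨V', iV', mV', ρ₁', W', iW', mW', ρ₂', hsub1, hsub2, e, he⟩
    -- the distinguishing affine relation
    have hmat1 : (∑ g : ↥(alternatingGroup (Fin 6)), lam f₂ g • permMat 6 (f₁ g)) = 0 := by
      ext i j
      rw [Matrix.sum_apply, Matrix.zero_apply]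
      simp only [Matrix.smul_apply, smul_eq_mul]
      have hent : ∀ g : ↥(alternatingGroup (Fin 6)),
          permMat 6 (f₁ g) i j = if i = f₁ g j then 1 else 0 := fun g => rfl
      simp only [hent]
      exact lam_rel f₁ f₂ hT i j
    have hk1 : lam f₂ ∈ affKer (permRep 6 f₁) := by
      constructor
      · have hrw : (∑ g : ↥(alternatingGroup (Fin 6)),
            lam f₂ g • ((permRep 6 f₁) g : (Fin 6 → ℝ) →ₗ[ℝ] (Fin 6 → ℝ)))
            = ∑ g : ↥(alternatingGroup (Fin 6)), lam f₂ g • (permMat 6 (f₁ g)).mulVecLin := rfl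
        rw [hrw, sum_smul_mulVecLin, hmat1, Matrix.mulVecLin_zero]
      · exact lam_sum_eq_zero f₁ f₂ hT
    have hk1' : lam f₂ ∈ affKer ρ₁' := hsub1 hk1
    -- the relation kills the first product representation
    have hprod1 : (∑ g : ↥(alternatingGroup (Fin 6)),
        lam f₂ g • ((prodRep (permRep 6 f₁) ρ₁') g : ((Fin 6 → ℝ) × V') →ₗ[ℝ] _)) = 0 := by
      apply LinearMap.ext; intro v
      rw [LinearMap.sum_apply, LinearMap.zero_apply]
      have hterm : ∀ g : ↥(alternatingGroup (Fin 6)),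
          (lam f₂ g • ((prodRep (permRep 6 f₁) ρ₁') g : ((Fin 6 → ℝ) × V') →ₗ[ℝ] _)) v
          = (lam f₂ g • ((permRep 6 f₁) g v.1), lam f₂ g • (ρ₁' g v.2)) := fun g => rfl
      simp only [hterm]
      apply Prod.ext
      · rw [Prod.fst_sum]
        have h0 := DFunLike.congr_fun hk1.1 v.1
        rw [LinearMap.sum_apply, LinearMap.zero_apply] at h0
        simpa only [LinearMap.smul_apply, Prod.fst_zero] using h0
      · rw [Prod.snd_sum]
        have h0 := DFunLike.congr_fun hk1'.1 v.2
        rw [LinearMap.sum_apply, LinearMap.zero_apply] at h0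
        simpa only [LinearMap.smul_apply, Prod.snd_zero] using h0
    -- transport through the isomorphism
    have hprod2 : (∑ g : ↥(alternatingGroup (Fin 6)),
        lam f₂ g • ((prodRep (permRep 6 f₂) ρ₂') g : ((Fin 6 → ℝ) × W') →ₗ[ℝ] _)) = 0 := by
      apply LinearMap.ext; intro w
      obtain ⟨v, rfl⟩ := e.surjective w
      rw [LinearMap.sum_apply, LinearMap.zero_apply]
      have hstep : ∀ g : ↥(alternatingGroup (Fin 6)),
          (lam f₂ g • ((prodRep (permRep 6 f₂) ρ₂') g : ((Fin 6 → ℝ) × W') →ₗ[ℝ] _)) (e v)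
          = lam f₂ g • e (((prodRep (permRep 6 f₁) ρ₁') g) v) := by
        intro g
        rw [LinearMap.smul_apply, he]
      simp only [hstep]
      have hsum : ∑ g : ↥(alternatingGroup (Fin 6)),
          lam f₂ g • e (((prodRep (permRep 6 f₁) ρ₁') g) v)
          = e (∑ g : ↥(alternatingGroup (Fin 6)),
              lam f₂ g • (((prodRep (permRep 6 f₁) ρ₁') g) v)) := by
        rw [map_sum]
        apply Finset.sum_congr rfl
        intro g _
        rw [map_smul]
      rw [hsum]
      have h0 : (∑ g : ↥(alternatingGroup (Fin 6)),
          lam f₂ g • (((prodRep (permRep 6 f₁) ρ₁') g) v)) = 0 := by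
        have h1 := DFunLike.congr_fun hprod1 v
        rw [LinearMap.sum_apply, LinearMap.zero_apply] at h1
        simpa only [LinearMap.smul_apply] using h1
      rw [h0, map_zero]
    -- extract the first component
    have hfin : (∑ g : ↥(alternatingGroup (Fin 6)),
        lam f₂ g • ((permRep 6 f₂) g : (Fin 6 → ℝ) →ₗ[ℝ] (Fin 6 → ℝ))) = 0 := by
      apply LinearMap.ext; intro v
      have h := DFunLike.congr_fun hprod2 (v, (0 : W'))
      rw [LinearMap.sum_apply, LinearMap.zero_apply] at h
      have h1 := congrArg Prod.fst h
      rw [Prod.fst_sum] at h1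
      have hterm : ∀ g : ↥(alternatingGroup (Fin 6)),
          ((lam f₂ g • ((prodRep (permRep 6 f₂) ρ₂') g : ((Fin 6 → ℝ) × W') →ₗ[ℝ] _))
            ((v, (0 : W')))).1
          = lam f₂ g • ((permRep 6 f₂) g v) := fun g => rfl
      simp only [hterm] at h1
      rw [LinearMap.sum_apply, LinearMap.zero_apply]
      simpa only [LinearMap.smul_apply, Prod.fst_zero] using h1
    -- contradiction with positivity
    have h00 := DFunLike.congr_fun hfin (Pi.single (0 : Fin 6) 1)
    rw [LinearMap.sum_apply, LinearMap.zero_apply] at h00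
    have h01 := congrFun h00 (0 : Fin 6)
    rw [Finset.sum_apply] at h01
    have hterm : ∀ g : ↥(alternatingGroup (Fin 6)),
        ((lam f₂ g • ((permRep 6 f₂) g : (Fin 6 → ℝ) →ₗ[ℝ] (Fin 6 → ℝ)))
          (Pi.single (0 : Fin 6) 1)) (0 : Fin 6)
        = lam f₂ g * (if (0 : Fin 6) = f₂ g 0 then 1 else 0) := by
      intro g
      rw [LinearMap.smul_apply, Pi.smul_apply, smul_eq_mul]
      congr 1
      show ((permMat 6 (f₂ g)).mulVec (Pi.single (0 : Fin 6) 1)) 0 = _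
      rw [Matrix.mulVec_single_one]
      rfl
    simp only [hterm] at h01
    have h5 := lam_pos f₂
    rw [h01] at h5
    norm_num at h5
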